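/- Let b > 2 be prime and gcd(b,2c) = gcd(b,2d) = 1. The discriminant quadratic forms of Λ_{b,c} and Λ_{b,d} are isomorphic if and only if there exists an integer a with gcd(a,b)=1 and c ≡ a²d (mod b²). Moreover this condition holds if and only if c ≡ a²d (mod b) for some integer a coprime to b. -/
import Mathlib


/-- The discriminant quadratic form of Λ_{b,c} (for gcd(b,2c)=1): on the cyclic
group ℤ/b², the generator g has q(g) = -2c/b² in ℚ/2ℤ. -/
def discForm (b : ℕ) (c : ℤ) (x : ZMod (b^2)) : ℚ ⧸ AddSubgroup.zmultiples (2:ℚ) :=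
  QuotientAddGroup.mk (-2 * c * (x.val : ℚ)^2 / (b^2 : ℚ))

lemma disc_eq_iff (b : ℕ) (hb : b ≠ 0) (c d : ℤ) (x y : ZMod (b^2)) :
    discForm b d y = discForm b c x ↔
      ((b:ℤ)^2 ∣ d * (y.val:ℤ)^2 - c * (x.val:ℤ)^2) := by
  have hbQ : (b:ℚ) ≠ 0 := Nat.cast_ne_zero.mpr hb
  rw [discForm, discForm, QuotientAddGroup.eq, AddSubgroup.mem_zmultiples_iff]
  constructor
  · rintro ⟨k, hk⟩
    refine ⟨k, ?_⟩
    have hk' : (k : ℚ) * 2 = -(-2 * d * (y.val : ℚ)^2 / (b^2:ℚ)) +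
        (-2 * c * (x.val : ℚ)^2 / (b^2:ℚ)) := by simpa [zsmul_eq_mul] using hk
    have : ((d * (y.val:ℤ)^2 - c * (x.val:ℤ)^2 : ℤ) : ℚ) = (((b:ℤ)^2 * k : ℤ) : ℚ) := by
      push_cast
      field_simp at hk'
      linarith [hk']
    exact_mod_cast this
  · rintro ⟨k, hk⟩
    refine ⟨k, ?_⟩
    have hk' : (d : ℚ) * (y.val : ℚ)^2 - (c:ℚ) * (x.val : ℚ)^2 = (b:ℚ)^2 * (k:ℚ) := by
      exact_mod_cast congrArg (fun z : ℤ => (z : ℚ)) hk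
    rw [zsmul_eq_mul]
    push_cast
    field_simp
    linarith [hk']

lemma coprime_of_not_dvd (b : ℕ) (hp : b.Prime) (a : ℤ) (h : ¬ (b:ℤ) ∣ a) :
    Int.gcd a (b : ℤ) = 1 := by
  have h' : ¬ b ∣ a.natAbs := by
    intro hh
    have h2 : ((b:ℤ)).natAbs ∣ a.natAbs := by simpa using hh
    exact h (Int.natAbs_dvd_natAbs.mp h2)
  have := (hp.coprime_iff_not_dvd.mpr h')
  simpa [Int.gcd, Int.natAbs_natCast, Nat.coprime_comm] using this

lemma dvd_one_absurd (b : ℕ) (h2 : 2 < b) (h : (b:ℤ) ∣ 1) : False := by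
  have := Int.le_of_dvd one_pos h
  omega

theorem stmt8 (b : ℕ) (hp : b.Prime) (h2 : 2 < b) (c d : ℤ)
    (hc : Int.gcd (b : ℤ) (2*c) = 1) (hd : Int.gcd (b : ℤ) (2*d) = 1) :
    ((∃ φ : ZMod (b^2) ≃+ ZMod (b^2), ∀ x, discForm b d (φ x) = discForm b c x) ↔
      ∃ a : ℤ, Int.gcd a (b : ℤ) = 1 ∧ c ≡ a^2 * d [ZMOD ((b : ℤ)^2)]) ∧
    ((∃ a : ℤ, Int.gcd a (b : ℤ) = 1 ∧ c ≡ a^2 * d [ZMOD ((b : ℤ)^2)]) ↔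
      ∃ a : ℤ, Int.gcd a (b : ℤ) = 1 ∧ c ≡ a^2 * d [ZMOD (b : ℤ)]) := by
  have hb0 : b ≠ 0 := by omega
  have hbprimeZ : Prime (b : ℤ) := Int.prime_iff_natAbs_prime.mpr (by simpa using hp)
  have hbne : NeZero (b^2) := ⟨by positivity⟩
  have hb2lt : Fact (1 < b^2) := ⟨by nlinarith⟩
  have hbc : ¬ (b:ℤ) ∣ c := fun h => dvd_one_absurd b h2 (by
    have h5 := Int.dvd_gcd (dvd_refl (b:ℤ)) (h.mul_left 2)
    rw [hc] at h5; exact_mod_cast h5)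
  have hbd : ¬ (b:ℤ) ∣ d := fun h => dvd_one_absurd b h2 (by
    have h5 := Int.dvd_gcd (dvd_refl (b:ℤ)) (h.mul_left 2)
    rw [hd] at h5; exact_mod_cast h5)
  have hb2' : ¬ (b:ℤ) ∣ 2 := fun h => by
    have := Int.le_of_dvd (by norm_num) h; omega
  constructor
  · constructor
    · rintro ⟨φ, hφ⟩
      set a : ℤ := ((φ 1).val : ℤ) with ha
      have h1 := (disc_eq_iff b hb0 c d 1 (φ 1)).mp (hφ 1)
      rw [ZMod.val_one] at h1
      have h3 : (b:ℤ)^2 ∣ c - a^2*d := by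
        have he : c - a^2*d = -(d * a^2 - c * ((1:ℕ):ℤ)^2) := by push_cast; ring
        rw [he]
        exact h1.neg_right
      have hmod : c ≡ a^2 * d [ZMOD ((b : ℤ)^2)] := (Int.modEq_iff_dvd.mpr h3).symm
      refine ⟨a, ?_, hmod⟩
      refine coprime_of_not_dvd b hp a (fun hba => hbc ?_)
      have hbb : (b:ℤ) ∣ c - a^2*d := dvd_trans ⟨(b:ℤ), by ring⟩ h3
      have h4 : (b:ℤ) ∣ a^2*d := (hba.pow (n := 2) (by norm_num)).mul_right d
      have := hbb.add h4
      simpa using this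
    · rintro ⟨a, hab, hmod⟩
      have hcop : IsCoprime a ((b:ℤ)^2) := by
        rw [Int.isCoprime_iff_gcd_eq_one]
        have h1 : Nat.Coprime a.natAbs b := hab
        have : Nat.Coprime a.natAbs (b^2) := h1.pow_right 2
        simpa [Int.gcd, Int.natAbs_pow] using this
      have hunit : IsUnit ((a : ZMod (b^2))) := by
        have hmap := hcop.map (Int.castRingHom (ZMod (b^2)))
        have hz : (((b:ℤ)^2 : ℤ) : ZMod (b^2)) = 0 := by
          rw [ZMod.intCast_zmod_eq_zero_iff_dvd]; exact_mod_cast dvd_rfl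
        rw [← isCoprime_zero_right (x := (a : ZMod (b^2))), ← hz]
        simpa using hmap
      refine ⟨DistribMulAction.toAddEquiv (ZMod (b^2)) hunit.unit, fun x => ?_⟩
      rw [disc_eq_iff b hb0]
      rw [show ((b:ℤ)^2) = ((b^2 : ℕ) : ℤ) by push_cast; ring]
      rw [← ZMod.intCast_zmod_eq_zero_iff_dvd]
      have happ : ((DistribMulAction.toAddEquiv (ZMod (b^2)) hunit.unit) x : ZMod (b^2))
          = (a : ZMod (b^2)) * x := by
        simp [DistribMulAction.toAddEquiv, Units.smul_def, smul_eq_mul, IsUnit.unit_spec]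
      push_cast
      simp only [ZMod.natCast_val, ZMod.cast_id]
      rw [happ]
      have hcd : (c : ZMod (b^2)) = ((a^2 * d : ℤ) : ZMod (b^2)) := by
        rw [ZMod.intCast_eq_intCast_iff]
        exact_mod_cast hmod
      push_cast at hcd
      rw [hcd]; ring
  · constructor
    · rintro ⟨a, hab, hmod⟩
      exact ⟨a, hab, hmod.of_dvd ⟨(b:ℤ), by ring⟩⟩
    · rintro ⟨a, hab, hmod⟩
      haveI : Fact b.Prime := ⟨hp⟩
      have hba : ¬ (b:ℤ) ∣ a := by
        intro h
        refine dvd_one_absurd b h2 ?_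
        have h5 := Int.dvd_gcd h (dvd_refl (b:ℤ))
        rw [hab] at h5; exact_mod_cast h5
      obtain ⟨t, ht⟩ : (b:ℤ) ∣ a^2*d - c := by
        have := Int.modEq_iff_dvd.mp hmod
        simpa using this
      have h2ad : ((2*a*d : ℤ) : ZMod b) ≠ 0 := by
        rw [Ne, ZMod.intCast_zmod_eq_zero_iff_dvd]
        intro h
        rcases hbprimeZ.dvd_mul.mp h with h' | h'
        · rcases hbprimeZ.dvd_mul.mp h' with h'' | h''
          · exact hb2' h''
          · exact hba h''
        · exact hbd h'
      set s0 : ZMod b := (-(t : ZMod b)) * ((2*a*d : ℤ) : ZMod b)⁻¹ with hs0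
      set s : ℤ := (s0.val : ℤ) with hs
      haveI : NeZero b := ⟨hb0⟩
      have hsval : ((s : ℤ) : ZMod b) = s0 := by
        simp [hs, ZMod.natCast_val, ZMod.cast_id]
      have hkey : ((t + 2*a*d*s : ℤ) : ZMod b) = 0 := by
        push_cast
        rw [hsval, hs0]
        rw [mul_comm (-(t : ZMod b)) _, ← mul_assoc]
        have : ((2*a*d : ℤ) : ZMod b) * ((2*a*d : ℤ) : ZMod b)⁻¹ = 1 :=
          ZMod.mul_inv_of_unit _ (by
            haveI : Fact b.Prime := ⟨hp⟩
            exact Ne.isUnit h2ad)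
        push_cast at this ⊢
        rw [this]
        ring
      obtain ⟨k, hk⟩ : (b:ℤ) ∣ t + 2*a*d*s := by
        rwa [ZMod.intCast_zmod_eq_zero_iff_dvd] at hkey
      refine ⟨a + s*b, ?_, ?_⟩
      · refine coprime_of_not_dvd b hp _ (fun h => hba ?_)
        have hsb : (b:ℤ) ∣ s*b := dvd_mul_left _ _
        simpa using h.sub hsb
      · refine Int.modEq_iff_dvd.mpr ⟨k + s^2*d, ?_⟩
        linear_combination ht + (b:ℤ)*hk
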